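/- Let a, b, c, δ̄ > 0 with 4ab > c² and consider maximizing min(γ₁ D₁, γ₂ D₂) over γ₁, γ₂ > 0 subject to a γ₁² + b γ₂² − c γ₁ γ₂ ≤ δ̄, where D₁, D₂ > 0. If c < min(2aD₂/D₁, 2bD₁/D₂), then the maximum equals D₁D₂ · sqrt( δ̄ / (a D₂² − c D₁ D₂ + b D₁²) ), attained with γ₁ D₁ = γ₂ D₂. -/
import Mathlib

set_option maxHeartbeats 1000000


/-- Closed-form solution of the throughput optimization: maximizing
`min(γ₁D₁, γ₂D₂)` over `γ₁, γ₂ > 0` with `aγ₁² + bγ₂² − cγ₁γ₂ ≤ δ̄`,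
when `c < min(2aD₂/D₁, 2bD₁/D₂)`, gives `D₁D₂·sqrt(δ̄/(aD₂² − cD₁D₂ + bD₁²))`,
attained at a point with `γ₁D₁ = γ₂D₂`. -/
theorem throughput_optimization (a b c δ D1 D2 : ℝ)
    (ha : 0 < a) (hb : 0 < b) (hc : 0 < c) (hδ : 0 < δ)
    (hD1 : 0 < D1) (hD2 : 0 < D2)
    (hdet : c^2 < 4 * a * b)
    (hcond : c < min (2 * a * D2 / D1) (2 * b * D1 / D2)) :
    IsGreatest
      {v : ℝ | ∃ γ1 γ2 : ℝ, 0 < γ1 ∧ 0 < γ2 ∧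
        a * γ1^2 + b * γ2^2 - c * γ1 * γ2 ≤ δ ∧ v = min (γ1 * D1) (γ2 * D2)}
      (D1 * D2 * Real.sqrt (δ / (a * D2^2 - c * D1 * D2 + b * D1^2))) ∧
    ∃ γ1 γ2 : ℝ, 0 < γ1 ∧ 0 < γ2 ∧
      a * γ1^2 + b * γ2^2 - c * γ1 * γ2 ≤ δ ∧ γ1 * D1 = γ2 * D2 ∧
      min (γ1 * D1) (γ2 * D2) =
        D1 * D2 * Real.sqrt (δ / (a * D2^2 - c * D1 * D2 + b * D1^2)) := by
  have hc1 : c * D1 < 2 * a * D2 := by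
    have := (lt_min_iff.mp hcond).1
    rw [lt_div_iff₀ hD1] at this; linarith
  have hc2 : c * D2 < 2 * b * D1 := by
    have := (lt_min_iff.mp hcond).2
    rw [lt_div_iff₀ hD2] at this; linarith
  set E : ℝ := a * D2^2 - c * D1 * D2 + b * D1^2 with hEdef
  have hE : 0 < E := by
    nlinarith [sq_nonneg (2 * a * D2 - c * D1), sq_nonneg D1, mul_pos hD1 hD1]
  set s : ℝ := Real.sqrt (δ / E) with hsdef
  have hs : 0 < s := Real.sqrt_pos.mpr (div_pos hδ hE)
  have hs2 : s ^ 2 = δ / E := Real.sq_sqrt (div_pos hδ hE).le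
  have hkey : ∀ γ1 γ2 : ℝ, 0 < γ1 → 0 < γ2 →
      a * γ1^2 + b * γ2^2 - c * γ1 * γ2 ≤ δ →
      min (γ1 * D1) (γ2 * D2) ≤ D1 * D2 * s := by
    intro γ1 γ2 h1 h2 hcon
    rcases le_total (γ1 * D1) (γ2 * D2) with hle | hle
    · rw [min_eq_left hle]
      -- show γ1 ≤ D2 * s
      have hsq : γ1 ^ 2 * E ≤ δ * D2 ^ 2 := by
        nlinarith [mul_nonneg (sub_nonneg.2 hle)
            (show (0:ℝ) ≤ b * (γ2 * D2 + γ1 * D1) - c * γ1 * D2 by nlinarith [mul_lt_mul_of_pos_left hc2 h1, mul_le_mul_of_nonneg_left hle hb.le]),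
          mul_le_mul_of_nonneg_right hcon (sq_nonneg D2)]
      have h1' : γ1 ≤ D2 * s := by
        have h2sq : γ1 ^ 2 ≤ (D2 * s) ^ 2 := by
          have hpow : (D2 * s) ^ 2 = D2 ^ 2 * δ / E := by
            rw [mul_pow, hs2]; ring
          rw [hpow, le_div_iff₀ hE]; nlinarith
        nlinarith [mul_pos hD2 hs]
      calc γ1 * D1 ≤ D2 * s * D1 := by nlinarith
        _ = D1 * D2 * s := by ring
    · rw [min_eq_right hle]
      have hsq : γ2 ^ 2 * E ≤ δ * D1 ^ 2 := by
        nlinarith [mul_nonneg (sub_nonneg.2 hle)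
            (show (0:ℝ) ≤ a * (γ1 * D1 + γ2 * D2) - c * γ2 * D1 by nlinarith [mul_lt_mul_of_pos_left hc1 h2, mul_le_mul_of_nonneg_left hle ha.le]),
          mul_le_mul_of_nonneg_right hcon (sq_nonneg D1)]
      have h2' : γ2 ≤ D1 * s := by
        have h2sq : γ2 ^ 2 ≤ (D1 * s) ^ 2 := by
          have hpow : (D1 * s) ^ 2 = D1 ^ 2 * δ / E := by
            rw [mul_pow, hs2]; ring
          rw [hpow, le_div_iff₀ hE]; nlinarith
        nlinarith [mul_pos hD1 hs]
      calc γ2 * D2 ≤ D1 * s * D2 := by nlinarith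
        _ = D1 * D2 * s := by ring
  have hconopt : a * (D2 * s)^2 + b * (D1 * s)^2 - c * (D2 * s) * (D1 * s) ≤ δ := by
    have : a * (D2 * s)^2 + b * (D1 * s)^2 - c * (D2 * s) * (D1 * s) = E * s ^ 2 := by
      ring
    rw [this, hs2, mul_div_cancel₀ _ hE.ne']
  have heq : D2 * s * D1 = D1 * s * D2 := by ring
  constructor
  · constructor
    · exact ⟨D2 * s, D1 * s, mul_pos hD2 hs, mul_pos hD1 hs, hconopt, by
        rw [heq, min_self]; ring⟩
    · rintro v ⟨γ1, γ2, h1, h2, hcon, rfl⟩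
      exact hkey γ1 γ2 h1 h2 hcon
  · exact ⟨D2 * s, D1 * s, mul_pos hD2 hs, mul_pos hD1 hs, hconopt, heq, by
      rw [heq, min_self]; ring⟩
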